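/- Let L, C, K > 0 be real numbers. Let h : [0,L] → ℝ be continuous with h > 0, let x_c ∈ [0,L] be a point at which h attains its minimum a = h(x_c), suppose h(x) ≤ a + C|x − x_c|^{1/2} for all x ∈ [0,L], and suppose ∫₀^L h(x)^{−2} dx ≤ K. Then a ≥ C √(L/2) · (exp(2C²K) − 1)^{−1/2}. -/

import Mathlib

open Set MeasureTheory intervalIntegral Filter Real

private lemma ftc_aux (c b T : ℝ) (hc : 0 < c) (hb : 0 < b) (hT : 0 ≤ T) :
    ∫ x in (0:ℝ)..T, (c * x + b)⁻¹ = (1 / c) * (Real.log (c * T + b) - Real.log b) := by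
  have hden : ∀ x ∈ Icc (0:ℝ) T, 0 < c * x + b := fun x hx => by nlinarith [hx.1]
  have key : ∫ x in (0:ℝ)..T, (c * x + b)⁻¹
      = (1 / c) * Real.log (c * T + b) - (1 / c) * Real.log (c * 0 + b) := by
    apply intervalIntegral.integral_eq_sub_of_hasDerivAt
    · intro x hx
      rw [uIcc_of_le hT] at hx
      have hne : c * x + b ≠ 0 := (hden x hx).ne'
      have h1 : HasDerivAt (fun x : ℝ => c * x + b) c x := by
        simpa using ((hasDerivAt_id x).const_mul c).add_const b
      have h2 := (h1.log hne).const_mul (1 / c)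
      convert h2 using 1
      · rfl
      field_simp
    · apply ContinuousOn.intervalIntegrable
      rw [uIcc_of_le hT]
      exact ContinuousOn.inv₀ (by fun_prop) (fun x hx => (hden x hx).ne')
  rw [key]; ring_nf

private lemma ptwise_aux (a C u hx : ℝ) (ha : 0 < a) (hu : 0 ≤ u) (hx0 : 0 < hx)
    (hle : hx ≤ a + C * u ^ ((1:ℝ) / 2)) :
    (2 * C ^ 2 * u + 2 * a ^ 2)⁻¹ ≤ hx ^ (-2 : ℝ) := by
  have hsq : (u ^ ((1:ℝ) / 2)) ^ (2:ℕ) = u := by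
    rw [← Real.rpow_natCast (u ^ ((1:ℝ)/2)) 2, ← Real.rpow_mul hu]
    norm_num
  have hx2 : hx ^ (2:ℕ) ≤ 2 * C ^ 2 * u + 2 * a ^ 2 := by
    have h1 : hx ^ (2:ℕ) ≤ (a + C * u ^ ((1:ℝ)/2)) ^ (2:ℕ) := by
      apply pow_le_pow_left₀ hx0.le hle
    have h2 : (a + C * u ^ ((1:ℝ)/2)) ^ (2:ℕ) ≤ 2 * a ^ 2 + 2 * C ^ 2 * u := by
      have expand : (a + C * u ^ ((1:ℝ)/2)) ^ (2:ℕ)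
          = a ^ 2 + 2 * a * (C * u ^ ((1:ℝ)/2)) + C ^ 2 * u := by
        have := hsq; ring_nf; nlinarith [hsq]
      nlinarith [sq_nonneg (a - C * u ^ ((1:ℝ)/2)), hsq]
    linarith
  have hrw : hx ^ (-2 : ℝ) = (hx ^ (2:ℕ))⁻¹ := by
    rw [← Real.rpow_natCast hx 2, ← Real.rpow_neg hx0.le]
    norm_num
  rw [hrw]
  exact inv_anti₀ (pow_pos hx0 2) hx2

/-- Positive lower bound for the minimum film thickness in the case `m = 3`. -/
theorem min_lower_bound_m_eq_three
    (L C K : ℝ) (hL : 0 < L) (hC : 0 < C) (hK : 0 < K)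
    (h : ℝ → ℝ) (hcont : ContinuousOn h (Icc (0:ℝ) L))
    (hpos : ∀ x ∈ Icc (0:ℝ) L, 0 < h x)
    (xc : ℝ) (hxc : xc ∈ Icc (0:ℝ) L)
    (hmin : ∀ x ∈ Icc (0:ℝ) L, h xc ≤ h x)
    (hHolder : ∀ x ∈ Icc (0:ℝ) L, h x ≤ h xc + C * |x - xc| ^ ((1:ℝ) / 2))
    (hint : (∫ x in (0:ℝ)..L, h x ^ (-2 : ℝ)) ≤ K) :
    C * Real.sqrt (L / 2) * (Real.exp (2 * C ^ 2 * K) - 1) ^ (-(1:ℝ) / 2) ≤ h xc := by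
  set a := h xc with ha_def
  have ha : 0 < a := hpos xc hxc
  set f : ℝ → ℝ := fun x => h x ^ (-2 : ℝ) with hf_def
  set T : ℝ := L / 2 with hT_def
  have hT : 0 < T := by positivity
  -- continuity and integrability of f on [0, L]
  have hf_cont : ContinuousOn f (Icc (0:ℝ) L) :=
    hcont.rpow_const (fun x hx => Or.inl (hpos x hx).ne')
  have hf_int : IntervalIntegrable f volume 0 L := by
    apply ContinuousOn.intervalIntegrable
    rwa [uIcc_of_le hL.le]
  have hf_nonneg : 0 ≤ᵐ[volume.restrict (Ioc (0:ℝ) L)] f := by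
    filter_upwards [ae_restrict_mem measurableSet_Ioc] with x hx
    exact Real.rpow_nonneg (hpos x (Ioc_subset_Icc_self hx)).le _
  -- continuity of the comparison function
  have hφden : ∀ x ∈ Icc (0:ℝ) T, 0 < 2 * C ^ 2 * x + 2 * a ^ 2 :=
    fun x hx => by nlinarith [hx.1]
  have hφ_cont : ContinuousOn (fun x => (2 * C ^ 2 * x + 2 * a ^ 2)⁻¹) (Icc (0:ℝ) T) :=
    ContinuousOn.inv₀ (by fun_prop) (fun x hx => (hφden x hx).ne')
  have hφ_int : IntervalIntegrable (fun x => (2 * C ^ 2 * x + 2 * a ^ 2)⁻¹) volume 0 T := by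
    apply ContinuousOn.intervalIntegrable
    rwa [uIcc_of_le hT.le]
  -- the key integral inequality
  have hI : (∫ x in (0:ℝ)..T, (2 * C ^ 2 * x + 2 * a ^ 2)⁻¹) ≤ K := by
    rcases le_or_gt xc T with hcase | hcase
    · -- right interval [xc, xc + T]
      have hmaps : ∀ x ∈ Icc (0:ℝ) T, x + xc ∈ Icc (0:ℝ) L := fun x hx =>
        ⟨by linarith [hx.1, hxc.1], by simp only [hT_def] at hcase hx ⊢; linarith [hx.2]⟩
      have hg_cont : ContinuousOn (fun x => f (x + xc)) (Icc (0:ℝ) T) :=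
        hf_cont.comp (by fun_prop) hmaps
      have hg_int : IntervalIntegrable (fun x => f (x + xc)) volume 0 T := by
        apply ContinuousOn.intervalIntegrable; rwa [uIcc_of_le hT.le]
      have step1 : (∫ x in (0:ℝ)..T, (2 * C ^ 2 * x + 2 * a ^ 2)⁻¹)
          ≤ ∫ x in (0:ℝ)..T, f (x + xc) := by
        apply intervalIntegral.integral_mono_on hT.le hφ_int hg_int
        intro x hx
        have hmem := hmaps x hx
        have hH := hHolder (x + xc) hmem
        rw [show x + xc - xc = x by ring, abs_of_nonneg hx.1] at hH
        exact ptwise_aux a C x (h (x + xc)) ha hx.1 (hpos _ hmem) hH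
      have step2 : (∫ x in (0:ℝ)..T, f (x + xc)) = ∫ x in xc..(T + xc), f x := by
        rw [intervalIntegral.integral_comp_add_right f xc]; norm_num
      have step3 : (∫ x in xc..(T + xc), f x) ≤ ∫ x in (0:ℝ)..L, f x := by
        apply intervalIntegral.integral_mono_interval hxc.1 (by linarith) _ hf_nonneg hf_int
        simp only [hT_def] at hcase ⊢; linarith
      calc (∫ x in (0:ℝ)..T, (2 * C ^ 2 * x + 2 * a ^ 2)⁻¹)
          ≤ ∫ x in xc..(T + xc), f x := step2 ▸ step1
        _ ≤ ∫ x in (0:ℝ)..L, f x := step3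
        _ ≤ K := hint
    · -- left interval [xc - T, xc]
      have hmaps : ∀ x ∈ Icc (0:ℝ) T, xc - x ∈ Icc (0:ℝ) L := fun x hx =>
        ⟨by simp only [hT_def] at hcase hx ⊢; linarith [hx.2], by linarith [hx.1, hxc.2]⟩
      have hg_cont : ContinuousOn (fun x => f (xc - x)) (Icc (0:ℝ) T) :=
        hf_cont.comp (by fun_prop) hmaps
      have hg_int : IntervalIntegrable (fun x => f (xc - x)) volume 0 T := by
        apply ContinuousOn.intervalIntegrable; rwa [uIcc_of_le hT.le]
      have step1 : (∫ x in (0:ℝ)..T, (2 * C ^ 2 * x + 2 * a ^ 2)⁻¹)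
          ≤ ∫ x in (0:ℝ)..T, f (xc - x) := by
        apply intervalIntegral.integral_mono_on hT.le hφ_int hg_int
        intro x hx
        have hmem := hmaps x hx
        have hH := hHolder (xc - x) hmem
        rw [show xc - x - xc = -x by ring, abs_neg, abs_of_nonneg hx.1] at hH
        exact ptwise_aux a C x (h (xc - x)) ha hx.1 (hpos _ hmem) hH
      have step2 : (∫ x in (0:ℝ)..T, f (xc - x)) = ∫ x in (xc - T)..xc, f x := by
        rw [intervalIntegral.integral_comp_sub_left f xc]; norm_num
      have step3 : (∫ x in (xc - T)..xc, f x) ≤ ∫ x in (0:ℝ)..L, f x := by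
        apply intervalIntegral.integral_mono_interval (by linarith) (by linarith) hxc.2
          hf_nonneg hf_int
      calc (∫ x in (0:ℝ)..T, (2 * C ^ 2 * x + 2 * a ^ 2)⁻¹)
          ≤ ∫ x in (xc - T)..xc, f x := step2 ▸ step1
        _ ≤ ∫ x in (0:ℝ)..L, f x := step3
        _ ≤ K := hint
  -- evaluate the integral
  have hC2 : (0:ℝ) < 2 * C ^ 2 := by positivity
  have ha2 : (0:ℝ) < 2 * a ^ 2 := by positivity
  rw [ftc_aux (2 * C ^ 2) (2 * a ^ 2) T hC2 ha2 hT.le] at hI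
  -- algebraic conclusion
  have hlog : Real.log (2 * C ^ 2 * T + 2 * a ^ 2) - Real.log (2 * a ^ 2)
      ≤ 2 * C ^ 2 * K := by
    rw [div_mul_eq_mul_div, one_mul, div_le_iff₀ hC2] at hI
    linarith [hI]
  have hnum : (0:ℝ) < 2 * C ^ 2 * T + 2 * a ^ 2 := by positivity
  have hratio : (2 * C ^ 2 * T + 2 * a ^ 2) / (2 * a ^ 2) ≤ Real.exp (2 * C ^ 2 * K) := by
    rw [← Real.log_le_iff_le_exp (by positivity), Real.log_div hnum.ne' ha2.ne']
    exact hlog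
  set E : ℝ := Real.exp (2 * C ^ 2 * K) - 1 with hE_def
  have hE : 0 < E := by
    have : (1:ℝ) < Real.exp (2 * C ^ 2 * K) := by
      rw [← Real.exp_zero]; apply Real.exp_lt_exp.mpr; positivity
    linarith
  have hkey : C ^ 2 * T ≤ a ^ 2 * E := by
    rw [div_le_iff₀ ha2] at hratio
    simp only [hE_def]; nlinarith [hratio]
  -- final squaring argument
  set S : ℝ := C * Real.sqrt T * E ^ (-(1:ℝ) / 2) with hS_def
  have hSnn : 0 ≤ S := by positivity
  have hSsq : S ^ 2 = C ^ 2 * T * E⁻¹ := by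
    have h1 : Real.sqrt T ^ 2 = T := Real.sq_sqrt hT.le
    have h2 : (E ^ (-(1:ℝ) / 2)) ^ (2:ℕ) = E⁻¹ := by
      rw [← Real.rpow_natCast (E ^ (-(1:ℝ)/2)) 2, ← Real.rpow_mul hE.le]
      norm_num [Real.rpow_neg_one]
    calc S ^ 2 = C ^ 2 * Real.sqrt T ^ 2 * (E ^ (-(1:ℝ)/2)) ^ (2:ℕ) := by ring
      _ = C ^ 2 * T * E⁻¹ := by rw [h1, h2]
  have hS2 : S ^ 2 ≤ a ^ 2 := by
    rw [hSsq]
    rw [mul_inv_le_iff₀ hE]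
    linarith [hkey]
  have : S ≤ a := by nlinarith [hS2, hSnn, ha]
  exact this
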